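/- Let X be a real or complex Banach space with k-polynomial numerical index n^(k)(X) = 1, for some integer k ≥ 1. Then for every point x ∈ ρ̃𝒫(ᵏX) (i.e., every strong norm-attainment point of a k-homogeneous scalar polynomial) and every extreme point x* of B_{X*}, one has |x*(x)| = 1. -/

import Mathlib

open Metric Filter Topology Set

/-- The sup norm of a function over the closed unit ball. -/
noncomputable def supNorm {X Y : Type*} [NormedAddCommGroup X] [NormedAddCommGroup Y]
    (f : X → Y) : ℝ :=
  sSup ((fun x => ‖f x‖) '' Metric.closedBall (0 : X) 1)

/-- `f` strongly attains its (sup) norm at `x₀`: every maximizing sequence in the closed unit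
ball has a subsequence converging to a unimodular multiple of `x₀`. -/
def StronglyAttains (𝕂 : Type*) [RCLike 𝕂] {X Y : Type*} [NormedAddCommGroup X]
    [NormedSpace 𝕂 X] [NormedAddCommGroup Y] (f : X → Y) (x₀ : X) : Prop :=
  ∀ xs : ℕ → X, (∀ n, xs n ∈ Metric.closedBall (0 : X) 1) →
    Tendsto (fun n => ‖f (xs n)‖) atTop (nhds (supNorm f)) →
    ∃ (α : 𝕂) (φ : ℕ → ℕ), StrictMono φ ∧ ‖α‖ = 1 ∧
      Tendsto (fun n => xs (φ n)) atTop (nhds (α • x₀))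

/-- The `k`-homogeneous polynomial associated to a continuous `k`-multilinear map. -/
noncomputable def polyEval {𝕂 : Type*} [RCLike 𝕂] {X Y : Type*} [NormedAddCommGroup X]
    [NormedSpace 𝕂 X] [NormedAddCommGroup Y] [NormedSpace 𝕂 Y] {k : ℕ}
    (L : ContinuousMultilinearMap 𝕂 (fun _ : Fin k => X) Y) : X → Y :=
  fun x => L (fun _ => x)

/-- The set `ρ̃𝒫(ᵏX)` of points of the closed unit ball at which some nonzero bounded
`k`-homogeneous scalar polynomial strongly attains its norm. -/
def polyAttainPts (𝕂 : Type*) [RCLike 𝕂] (X : Type*) [NormedAddCommGroup X]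
    [NormedSpace 𝕂 X] (k : ℕ) : Set X :=
  {x₀ | x₀ ∈ Metric.closedBall (0 : X) 1 ∧
    ∃ L : ContinuousMultilinearMap 𝕂 (fun _ : Fin k => X) 𝕂,
      polyEval L ≠ 0 ∧ StronglyAttains 𝕂 (polyEval L) x₀}

/-- Numerical radius `v(f) = sup { |x*(f x)| : (x, x*) ∈ Π(X) }`. -/
noncomputable def numRadius (𝕂 : Type*) [RCLike 𝕂] {X : Type*} [NormedAddCommGroup X]
    [NormedSpace 𝕂 X] (f : X → X) : ℝ :=
  sSup {r | ∃ (x : X) (x' : X →L[𝕂] 𝕂), ‖x‖ = 1 ∧ ‖x'‖ = 1 ∧ x' x = 1 ∧ r = ‖x' (f x)‖}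

/-- The `k`-polynomial numerical index `n^(k)(X)`. -/
noncomputable def polyNumIndex (𝕂 : Type*) [RCLike 𝕂] (X : Type*) [NormedAddCommGroup X]
    [NormedSpace 𝕂 X] (k : ℕ) : ℝ :=
  sInf {r | ∃ L : ContinuousMultilinearMap 𝕂 (fun _ : Fin k => X) X,
    supNorm (polyEval L) = 1 ∧ r = numRadius 𝕂 (polyEval L)}

/-- The numerical index `n(X)` of a Banach space. -/
noncomputable def numIndex (𝕂 : Type*) [RCLike 𝕂] (X : Type*) [NormedAddCommGroup X]
    [NormedSpace 𝕂 X] : ℝ :=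
  sInf {r | ∃ T : X →L[𝕂] X, ‖T‖ = 1 ∧ r = numRadius 𝕂 (⇑T)}

/-- `x` is an extreme point of the convex set `s` : `y + z = 2x` with `y, z ∈ s` forces
`y = z = x`. -/
def IsExtremePt {E : Type*} [AddCommGroup E] (s : Set E) (x : E) : Prop :=
  x ∈ s ∧ ∀ y ∈ s, ∀ z ∈ s, y + z = x + x → y = x ∧ z = x

/-- `x` is a strongly exposed point of the closed unit ball. -/
def StronglyExposedPt (𝕂 : Type*) [RCLike 𝕂] {X : Type*} [NormedAddCommGroup X]
    [NormedSpace 𝕂 X] (x : X) : Prop :=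
  x ∈ Metric.closedBall (0 : X) 1 ∧ ∃ x' : X →L[𝕂] 𝕂, x' ≠ 0 ∧ ‖x'‖ ≤ 1 ∧
    (∀ y ∈ Metric.closedBall (0 : X) 1, RCLike.re (x' y) ≤ RCLike.re (x' x)) ∧
    ∀ xs : ℕ → X, (∀ n, xs n ∈ Metric.closedBall (0 : X) 1) →
      Tendsto (fun n => RCLike.re (x' (xs n))) atTop (nhds (RCLike.re (x' x))) →
      Tendsto xs atTop (nhds x)

/-- `x'` is a weak-* exposed point of the dual unit ball. -/
def WeakStarExposed (𝕂 : Type*) [RCLike 𝕂] {X : Type*} [NormedAddCommGroup X]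
    [NormedSpace 𝕂 X] (x' : X →L[𝕂] 𝕂) : Prop :=
  ‖x'‖ ≤ 1 ∧ ∃ x ∈ Metric.closedBall (0 : X) 1, x' x = 1 ∧
    ∀ y' : X →L[𝕂] 𝕂, ‖y'‖ ≤ 1 → y' x = 1 → y' = x'

/-- `f` is a strong peak function at `x₀`: `f` is nonzero on the ball and every maximizing
sequence in the closed unit ball converges to `x₀`. -/
def StrongPeakAt {X Y : Type*} [NormedAddCommGroup X] [NormedAddCommGroup Y]
    (f : X → Y) (x₀ : X) : Prop :=
  (∃ x ∈ Metric.closedBall (0 : X) 1, f x ≠ 0) ∧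
    ∀ xs : ℕ → X, (∀ n, xs n ∈ Metric.closedBall (0 : X) 1) →
      Tendsto (fun n => ‖f (xs n)‖) atTop (nhds (supNorm f)) →
      Tendsto xs atTop (nhds x₀)

/-- Complex extreme point of the closed unit ball. -/
def ComplexExtremePoint {X : Type*} [NormedAddCommGroup X] [NormedSpace ℂ X] (x : X) : Prop :=
  x ∈ Metric.closedBall (0 : X) 1 ∧
    ∀ y : X, (∀ θ : ℝ, ‖x + Complex.exp (θ * Complex.I) • y‖ ≤ 1) → y = 0

/-- Membership in `A_b(B_X : Y)`: bounded, continuous on the closed unit ball and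
holomorphic on the open unit ball. -/
def MemAb {X Y : Type*} [NormedAddCommGroup X] [NormedSpace ℂ X] [NormedAddCommGroup Y]
    [NormedSpace ℂ Y] (f : X → Y) : Prop :=
  ContinuousOn f (Metric.closedBall (0 : X) 1) ∧
    (∃ C, ∀ x ∈ Metric.closedBall (0 : X) 1, ‖f x‖ ≤ C) ∧
    DifferentiableOn ℂ f (Metric.ball (0 : X) 1)

/-- Membership in `A_u(B_X : Y)`: additionally uniformly continuous on the closed ball. -/
def MemAu {X Y : Type*} [NormedAddCommGroup X] [NormedSpace ℂ X] [NormedAddCommGroup Y]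
    [NormedSpace ℂ Y] (f : X → Y) : Prop :=
  MemAb f ∧ UniformContinuousOn f (Metric.closedBall (0 : X) 1)

/-- The set `ρA_u(B_X)` of strong peak points of `A_u(B_X)`. -/
def strongPeakPtsAu (X : Type*) [NormedAddCommGroup X] [NormedSpace ℂ X] : Set X :=
  {x₀ | ∃ f : X → ℂ, MemAu f ∧ StrongPeakAt f x₀}

/-- The holomorphic numerical index `n_u(X)`. -/
noncomputable def holNumIndex (X : Type*) [NormedAddCommGroup X] [NormedSpace ℂ X] : ℝ :=
  sInf {r | ∃ f : X → X, MemAu f ∧ supNorm f = 1 ∧ r = numRadius ℂ f}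

section Aux

variable {E : Type*} [AddCommGroup E] [Module ℝ E] [TopologicalSpace E] [T2Space E]
  [IsTopologicalAddGroup E] [ContinuousSMul ℝ E]

lemma my_isCompact_convexJoin {s t : Set E} (hs : IsCompact s) (ht : IsCompact t) :
    IsCompact (convexJoin ℝ s t) := by
  have h : convexJoin ℝ s t =
      (fun p : ℝ × E × E => (1 - p.1) • p.2.1 + p.1 • p.2.2) '' (Icc (0:ℝ) 1 ×ˢ s ×ˢ t) := by
    ext x
    simp only [mem_convexJoin, Set.mem_image, Set.mem_prod]
    constructor
    · rintro ⟨a, ha, b, hb, hx⟩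
      rw [segment_eq_image ℝ a b] at hx
      rcases hx with ⟨θ, hθ, rfl⟩
      exact ⟨⟨θ, a, b⟩, ⟨hθ, ha, hb⟩, rfl⟩
    · rintro ⟨⟨θ, a, b⟩, ⟨hθ, ha, hb⟩, rfl⟩
      exact ⟨a, ha, b, hb, by rw [segment_eq_image ℝ a b]; exact ⟨θ, hθ, rfl⟩⟩
  rw [h]
  exact ((isCompact_Icc).prod (hs.prod ht)).image (by fun_prop)

lemma my_isCompact_convexHull_iUnion {ι : Type*} (F : Finset ι) (C : ι → Set E)
    (hne : ∀ i ∈ F, (C i).Nonempty) (hcv : ∀ i ∈ F, Convex ℝ (C i))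
    (hcp : ∀ i ∈ F, IsCompact (C i)) :
    IsCompact (convexHull ℝ (⋃ i ∈ F, C i)) := by
  classical
  induction F using Finset.induction_on with
  | empty => simp [convexHull_empty]
  | @insert a F ha IH =>
    have hunion : (⋃ i ∈ insert a F, C i) = C a ∪ ⋃ i ∈ F, C i := by
      simp [Set.iUnion_or, Set.iUnion_union_distrib]
    rcases F.eq_empty_or_nonempty with rfl | hFne
    · simp only [hunion]
      rw [show (⋃ i ∈ (∅ : Finset ι), C i) = (∅ : Set E) by simp, Set.union_empty,
        (hcv a (by simp)).convexHull_eq]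
      exact hcp a (by simp)
    · obtain ⟨i, hi⟩ := hFne
      obtain ⟨x, hx⟩ := hne i (Finset.mem_insert_of_mem hi)
      have hUne : (⋃ i ∈ F, C i).Nonempty := ⟨x, Set.mem_iUnion₂.2 ⟨i, hi, hx⟩⟩
      rw [hunion, convexHull_union (hne a (by simp)) hUne,
        (hcv a (by simp)).convexHull_eq]
      exact my_isCompact_convexJoin (hcp a (by simp))
        (IH (fun j hj => hne j (Finset.mem_insert_of_mem hj))
          (fun j hj => hcv j (Finset.mem_insert_of_mem hj))
          (fun j hj => hcp j (Finset.mem_insert_of_mem hj)))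

lemma my_extreme_mem_of_convexHull_iUnion {ι : Type*} (F : Finset ι) (C : ι → Set E) {s : Set E}
    (hsc : Convex ℝ s) (hC : ∀ i ∈ F, C i ⊆ s) (hcv : ∀ i ∈ F, Convex ℝ (C i)) {x : E}
    (hx : x ∈ s.extremePoints ℝ) (hmem : x ∈ convexHull ℝ (⋃ i ∈ F, C i)) :
    ∃ i ∈ F, x ∈ C i := by
  classical
  induction F using Finset.induction_on with
  | empty => simp [convexHull_empty] at hmem
  | @insert a F ha IH =>
    have hunion : (⋃ i ∈ insert a F, C i) = C a ∪ ⋃ i ∈ F, C i := by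
      simp [Set.iUnion_or, Set.iUnion_union_distrib]
    rw [hunion] at hmem
    rcases Set.eq_empty_or_nonempty (C a) with hCa | hCane
    · rw [hCa, Set.empty_union] at hmem
      obtain ⟨i, hi, hxi⟩ := IH (fun j hj => hC j (Finset.mem_insert_of_mem hj))
        (fun j hj => hcv j (Finset.mem_insert_of_mem hj)) hmem
      exact ⟨i, Finset.mem_insert_of_mem hi, hxi⟩
    rcases Set.eq_empty_or_nonempty (⋃ i ∈ F, C i) with hU | hUne
    · rw [hU, Set.union_empty, (hcv a (by simp)).convexHull_eq] at hmem
      exact ⟨a, by simp, hmem⟩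
    · rw [convexHull_union hCane hUne, (hcv a (by simp)).convexHull_eq] at hmem
      rw [mem_convexJoin] at hmem
      obtain ⟨y, hy, z, hz, hseg⟩ := hmem
      have hzs : z ∈ s := convexHull_min (Set.iUnion₂_subset fun j hj =>
        hC j (Finset.mem_insert_of_mem hj)) hsc hz
      have hys : y ∈ s := hC a (by simp) hy
      rcases eq_or_ne x y with rfl | hxy
      · exact ⟨a, by simp, hy⟩
      rcases eq_or_ne x z with rfl | hxz
      · obtain ⟨i, hi, hxi⟩ := IH (fun j hj => hC j (Finset.mem_insert_of_mem hj))
          (fun j hj => hcv j (Finset.mem_insert_of_mem hj)) hz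
        exact ⟨i, Finset.mem_insert_of_mem hi, hxi⟩
      · have hopen : x ∈ openSegment ℝ y z := by
          rcases hseg with ⟨p, q, hp, hq, hpq, rfl⟩
          rcases hp.eq_or_lt with rfl | hp'
          · exfalso; apply hxz; rw [zero_add] at hpq; rw [hpq]; simp
          rcases hq.eq_or_lt with rfl | hq'
          · exfalso; apply hxy; rw [add_zero] at hpq; rw [hpq]; simp
          · exact ⟨p, q, hp', hq', hpq, rfl⟩
        have := hx.2 hys hzs hopen
        exact absurd this.symm hxy

/-- **Milman's theorem**. -/
lemma my_milman [LocallyConvexSpace ℝ E] {K s : Set E} (hK : IsCompact K)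
    (hs : s = closure (convexHull ℝ K)) (hscomp : IsCompact s) {x : E}
    (hx : x ∈ s.extremePoints ℝ) : x ∈ K := by
  by_contra hxK
  -- the neighborhood U of 0 witnessing x ∉ K
  have hKc : IsClosed K := hK.isClosed
  have hU : (fun u => x - u) ⁻¹' Kᶜ ∈ 𝓝 (0 : E) := by
    have : Continuous fun u : E => x - u := by fun_prop
    apply this.continuousAt.preimage_mem_nhds
    simpa using hKc.isOpen_compl.mem_nhds hxK
  set U : Set E := (fun u => x - u) ⁻¹' Kᶜ with hUdef
  obtain ⟨Cc, hCc_mem, hCc_closed, hCcU⟩ := exists_mem_nhds_isClosed_subset hU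
  obtain ⟨V, ⟨hV_mem, hV_conv⟩, hVC⟩ :=
    (LocallyConvexSpace.convex_basis_zero ℝ E).mem_iff.mp hCc_mem
  have hclV_sub : closure V ⊆ U :=
    (closure_minimal hVC hCc_closed).trans hCcU
  -- cover K
  have hWnhds : ∀ a ∈ K, (fun y => y - a) ⁻¹' V ∈ 𝓝 a := by
    intro a _
    have : Continuous fun y : E => y - a := by fun_prop
    apply this.continuousAt.preimage_mem_nhds
    simpa using hV_mem
  obtain ⟨F, hFK, hcover⟩ := hK.elim_nhds_subcover (fun a => (fun y => y - a) ⁻¹' V) hWnhds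
  -- the pieces
  set D : E → Set E := fun a => closure (convexHull ℝ (K ∩ (fun y => y - a) ⁻¹' V)) with hDdef
  have hDs : ∀ a ∈ F, D a ⊆ s := by
    intro a _
    rw [hs]
    exact closure_mono (convexHull_mono Set.inter_subset_left)
  have hDconv : ∀ a ∈ F, Convex ℝ (D a) := fun a _ => (convex_convexHull ℝ _).closure
  have hDcomp : ∀ a ∈ F, IsCompact (D a) :=
    fun a haF => hscomp.of_isClosed_subset isClosed_closure (hDs a haF)
  have hDne : ∀ a ∈ F, (D a).Nonempty := by
    intro a haF
    refine ⟨a, subset_closure (subset_convexHull ℝ _ ⟨hFK a haF, ?_⟩)⟩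
    simp only [Set.mem_preimage, sub_self]
    exact mem_of_mem_nhds hV_mem
  have hDshift : ∀ a ∈ F, D a ⊆ (fun y => y - a) ⁻¹' closure V := by
    intro a _
    have hconv' : Convex ℝ ((fun y => y - a) ⁻¹' closure V) := by
      intro y hy z hz p q hp hq hpq
      simp only [Set.mem_preimage] at hy hz ⊢
      have h2 : p • y - p • a + (q • z - q • a) = p • y + q • z - (p + q) • a := by
        rw [add_smul]; abel
      have key : p • (y - a) + q • (z - a) = p • y + q • z - a := by
        rw [smul_sub, smul_sub, h2, hpq, one_smul]
      rw [← key]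
      exact hV_conv.closure hy hz hp hq hpq
    have hclosed' : IsClosed ((fun y => y - a) ⁻¹' closure V) :=
      isClosed_closure.preimage (by fun_prop)
    apply closure_minimal _ hclosed'
    apply convexHull_min _ hconv'
    exact fun y hy => (Set.preimage_mono subset_closure) hy.2
  -- s is contained in the convex hull of the pieces
  set Dh : Set E := convexHull ℝ (⋃ a ∈ F, D a) with hDhdef
  have hDhcomp : IsCompact Dh := my_isCompact_convexHull_iUnion F D hDne hDconv hDcomp
  have hsD : s ⊆ Dh := by
    rw [hs]
    apply closure_minimal _ hDhcomp.isClosed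
    apply convexHull_min _ (convex_convexHull ℝ _)
    intro y hyK
    obtain ⟨a, haF, hya⟩ := Set.mem_iUnion₂.1 (hcover hyK)
    exact subset_convexHull ℝ _ (Set.mem_iUnion₂.2 ⟨a, haF, subset_closure
      (subset_convexHull ℝ _ ⟨hyK, hya⟩)⟩)
  -- conclude
  have hsconv : Convex ℝ s := by rw [hs]; exact (convex_convexHull ℝ K).closure
  obtain ⟨a, haF, hxa⟩ := my_extreme_mem_of_convexHull_iUnion F D hsconv hDs hDconv hx
    (hsD hx.1)
  have : x - a ∈ closure V := hDshift a haF hxa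
  have hxa' : x - a ∈ U := hclV_sub this
  rw [hUdef] at hxa'
  simp only [Set.mem_preimage, Set.mem_compl_iff, sub_sub_cancel] at hxa'
  exact hxa' (hFK a haF)

end Aux
section WeakStar

variable {𝕂 X : Type*} [RCLike 𝕂] [NormedAddCommGroup X] [NormedSpace 𝕂 X]

noncomputable instance : LocallyConvexSpace ℝ (WeakDual 𝕂 X) := WeakBilin.locallyConvexSpace

/-- Every continuous real-linear functional on the weak-* dual is of the form
`f ↦ re (f w)`. -/
lemma my_weakdual_dual_eval (ℓ : WeakDual 𝕂 X →L[ℝ] ℝ) :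
    ∃ w : X, ∀ f : WeakDual 𝕂 X, ℓ f = RCLike.re (f w) := by
  classical
  -- continuity at 0 gives a basis set
  have h0 : ℓ ⁻¹' (Metric.ball (0:ℝ) 1) ∈ 𝓝 (0 : WeakDual 𝕂 X) := by
    have := ℓ.continuous.continuousAt (x := 0)
    apply this.preimage_mem_nhds
    rw [map_zero]
    exact Metric.ball_mem_nhds _ one_pos
  obtain ⟨U, hU, hUsub⟩ :=
    ((LinearMap.hasBasis_weakBilin (topDualPairing 𝕂 X)).mem_iff).1 h0
  obtain ⟨s, r, hr, rfl⟩ := (SeminormFamily.basisSets_iff _).1 hU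
  -- vanishing on common kernels
  have hker : ∀ f : WeakDual 𝕂 X, (∀ y ∈ s, f y = 0) → ℓ f = 0 := by
    intro f hf
    by_contra hne
    have hpos : 0 < |ℓ f| := abs_pos.mpr hne
    set c : ℝ := 2 / |ℓ f| with hc
    have hcpos : 0 < c := div_pos two_pos hpos
    have hmem : c • f ∈ (s.sup ((topDualPairing 𝕂 X).toSeminormFamily)).ball 0 r := by
      refine (Seminorm.mem_ball_zero _).2 ?_
      apply Seminorm.finset_sup_apply_lt hr
      intro y hy
      show ‖(c • f) y‖ < r
      have h2 : (c • f) y = c • (f y) := rfl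
      rw [h2, hf y hy, smul_zero, norm_zero]
      exact hr
    have := hUsub hmem
    change dist (ℓ (c • f)) 0 < 1 at this
    rw [map_smul] at this
    have habs : |c| * |ℓ f| < 1 := by simpa [Real.dist_eq, abs_mul] using this
    rw [abs_of_pos hcpos, hc, div_mul_cancel₀] at habs
    · linarith
    · exact ne_of_gt hpos
  -- the finite family of real-linear functionals
  have instF : Fintype {y // y ∈ s} := FinsetCoe.fintype s
  set ι := ({y // y ∈ s} × Bool)
  set ev : X → (WeakDual 𝕂 X →ₗ[ℝ] 𝕂) := fun y =>
    { toFun := fun f => f y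
      map_add' := fun f g => rfl
      map_smul' := fun c f => rfl } with hev
  set L : ι → (WeakDual 𝕂 X →ₗ[ℝ] ℝ) := fun i =>
    if i.2 then (RCLike.imLm).comp (ev i.1) else (RCLike.reLm).comp (ev i.1) with hL
  have hKer : ⨅ i, LinearMap.ker (L i) ≤ LinearMap.ker (ℓ : WeakDual 𝕂 X →ₗ[ℝ] ℝ) := by
    intro f hf
    simp only [Submodule.mem_iInf, LinearMap.mem_ker] at hf ⊢
    apply hker
    intro y hy
    have h1 := hf ⟨⟨y, hy⟩, false⟩
    have h2 := hf ⟨⟨y, hy⟩, true⟩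
    simp only [hL, if_true, if_false, LinearMap.comp_apply] at h1 h2
    apply RCLike.ext
    · simpa using (show RCLike.re (f y) = 0 from h1)
    · simpa using (show RCLike.im (f y) = 0 from h2)
  have hspan := mem_span_of_iInf_ker_le_ker (L := L) (K := (ℓ : WeakDual 𝕂 X →ₗ[ℝ] ℝ)) hKer
  obtain ⟨c, hc⟩ := (Submodule.mem_span_range_iff_exists_fun ℝ).1 hspan
  -- assemble the vector w
  set v : ι → X := fun i => if i.2 then (-(RCLike.I : 𝕂)) • (i.1 : X) else (i.1 : X) with hv
  refine ⟨∑ i : ι, ((c i : ℝ) : 𝕂) • v i, fun f => ?_⟩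
  have hfw : f (∑ i : ι, ((c i : ℝ) : 𝕂) • v i) = ∑ i : ι, ((c i : ℝ) : 𝕂) * f (v i) := by
    rw [map_sum]
    congr 1
    ext i
    rw [map_smul, smul_eq_mul]
  rw [hfw, map_sum]
  have hLf : ∀ i : ι, RCLike.re (((c i : ℝ) : 𝕂) * f (v i)) = c i * (L i f) := by
    intro i
    rw [RCLike.re_ofReal_mul]
    congr 1
    rcases i with ⟨y, b⟩
    cases b
    · simp only [hv, hL, if_false, Bool.false_eq_true]
      rfl
    · simp only [hv, hL, if_true]
      have h1 : f ((-(RCLike.I : 𝕂)) • (y : X)) = -((RCLike.I : 𝕂) * f (y : X)) := by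
        rw [map_smul, smul_eq_mul, neg_mul]
      rw [h1, map_neg, RCLike.I_mul_re, neg_neg]
      rfl
  calc ℓ f = (∑ i : ι, c i • L i) f := by rw [hc]; rfl
    _ = ∑ i : ι, c i * (L i f) := by
        rw [LinearMap.sum_apply]
        exact Finset.sum_congr rfl fun i _ => by rw [LinearMap.smul_apply, smul_eq_mul]
    _ = ∑ i : ι, RCLike.re (((c i : ℝ) : 𝕂) * f (v i)) :=
        Finset.sum_congr rfl fun i _ => (hLf i).symm

end WeakStar
section Key

variable {𝕂 X : Type*} [RCLike 𝕂] [NormedAddCommGroup X] [NormedSpace 𝕂 X]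

/-- The weak-* closed unit ball. -/
noncomputable def dualBallW (𝕂 X : Type*) [RCLike 𝕂] [NormedAddCommGroup X]
    [NormedSpace 𝕂 X] : Set (WeakDual 𝕂 X) :=
  WeakDual.toStrongDual ⁻¹' Metric.closedBall 0 1

lemma mem_dualBallW {f : WeakDual 𝕂 X} :
    f ∈ dualBallW 𝕂 X ↔ ‖WeakDual.toStrongDual f‖ ≤ 1 := by
  simp [dualBallW, mem_closedBall_zero_iff]

lemma dualBallW_convex : Convex ℝ (dualBallW 𝕂 X) := by
  intro y hy z hz p q hp hq hpq
  rw [mem_dualBallW] at *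
  have : WeakDual.toStrongDual (p • y + q • z)
      = p • WeakDual.toStrongDual y + q • WeakDual.toStrongDual z := rfl
  rw [this]
  calc ‖p • WeakDual.toStrongDual y + q • WeakDual.toStrongDual z‖
      ≤ ‖p • WeakDual.toStrongDual y‖ + ‖q • WeakDual.toStrongDual z‖ := norm_add_le _ _
    _ = p * ‖WeakDual.toStrongDual y‖ + q * ‖WeakDual.toStrongDual z‖ := by
        rw [norm_smul, norm_smul, Real.norm_of_nonneg hp, Real.norm_of_nonneg hq]
    _ ≤ p * 1 + q * 1 := by
        gcongr
    _ = 1 := by rw [mul_one, mul_one, hpq]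

lemma my_ball_subset_closure_convexHull {A : Set (WeakDual 𝕂 X)}
    (hbal : ∀ f ∈ A, ∀ α : 𝕂, ‖α‖ = 1 → α • f ∈ A)
    (hnorm : ∀ w : X, ∃ f ∈ A, ‖f w‖ = ‖w‖) :
    dualBallW 𝕂 X ⊆ closure (convexHull ℝ A) := by
  intro e he
  by_contra heC
  obtain ⟨ℓ, u, hsep⟩ := geometric_hahn_banach_closed_point
    (s := closure (convexHull ℝ A)) (convex_convexHull ℝ A).closure isClosed_closure heC
  obtain ⟨w, hw⟩ := my_weakdual_dual_eval ℓ
  obtain ⟨f, hfA, hfw⟩ := hnorm w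
  -- rotate f so that its value at w is real nonnegative
  have key : ∃ g ∈ A, RCLike.re (g w) = ‖w‖ := by
    rcases eq_or_ne (f w) 0 with h0 | h0
    · refine ⟨f, hfA, ?_⟩
      rw [h0, map_zero, ← hfw, h0, norm_zero]
    · set α : 𝕂 := (‖f w‖ : 𝕂) / (f w) with hα
      have hαnorm : ‖α‖ = 1 := by
        rw [hα, norm_div, RCLike.norm_ofReal, abs_of_nonneg (norm_nonneg _),
          div_self (norm_ne_zero_iff.mpr h0)]
      refine ⟨α • f, hbal f hfA α hαnorm, ?_⟩
      have : (α • f) w = α * f w := rfl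
      rw [this, hα, div_mul_cancel₀ _ h0]
      rw [RCLike.ofReal_re, hfw]
  obtain ⟨g, hgA, hgw⟩ := key
  have hg_lt : ℓ g < u := (hsep.1 g (subset_closure (subset_convexHull ℝ A hgA)))
  have h1 : ‖w‖ < u := by rw [← hgw, ← hw g]; exact hg_lt
  have h2 : u < RCLike.re (e w) := by rw [← hw e]; exact hsep.2
  have h3 : RCLike.re (e w) ≤ ‖w‖ := by
    calc RCLike.re (e w) ≤ ‖e w‖ := RCLike.re_le_norm _
      _ ≤ ‖WeakDual.toStrongDual e‖ * ‖w‖ := ContinuousLinearMap.le_opNorm _ _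
      _ ≤ 1 * ‖w‖ := by
          apply mul_le_mul_of_nonneg_right _ (norm_nonneg w)
          exact mem_dualBallW.1 he
      _ = ‖w‖ := one_mul _
  linarith

/-- Transfer of the midpoint extreme point property to `extremePoints`. -/
lemma my_extremePt_mem_extremePoints {e : X →L[𝕂] 𝕂}
    (he : IsExtremePt (Metric.closedBall (0 : X →L[𝕂] 𝕂) 1) e) :
    (StrongDual.toWeakDual e) ∈ (dualBallW 𝕂 X).extremePoints ℝ := by
  constructor
  · rw [mem_dualBallW]
    have := he.1
    rwa [mem_closedBall_zero_iff] at this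
  · intro y hy z hz hseg
    obtain ⟨p, q, hp, hq, hpq, hcombo⟩ := hseg
    -- midpoint trick
    set m := min p q with hm
    have hmpos : 0 < m := lt_min hp hq
    have hmp : m ≤ p := min_le_left _ _
    have hmq : m ≤ q := min_le_right _ _
    set y' : WeakDual 𝕂 X := (p + m) • y + (q - m) • z with hy'
    set z' : WeakDual 𝕂 X := (p - m) • y + (q + m) • z with hz'
    have hy'ball : y' ∈ dualBallW 𝕂 X := by
      have := dualBallW_convex hy hz (by linarith : (0:ℝ) ≤ p + m)
        (by linarith : (0:ℝ) ≤ q - m) (by linarith)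
      exact this
    have hz'ball : z' ∈ dualBallW 𝕂 X := by
      have := dualBallW_convex hy hz (by linarith : (0:ℝ) ≤ p - m)
        (by linarith : (0:ℝ) ≤ q + m) (by linarith)
      exact this
    have hsum : y' + z' = (StrongDual.toWeakDual e) + (StrongDual.toWeakDual e) := by
      rw [hy', hz', ← hcombo]
      have h2 : ∀ w : WeakDual 𝕂 X, (p + m) • w = p • w + m • w := fun w => add_smul p m w
      module
    have h1 := he.2 y' hy'ball z' hz'ball hsum
    have hyz : y = z := by
      have := h1.1
      rw [hy'] at this
      -- (p+m) y + (q-m) z = e = p y + q z  ⇒  m y = m z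
      have h2 : (p + m) • y + (q - m) • z = p • y + q • z := by
        rw [this]; exact hcombo.symm
      have h3 : m • y = m • z := by
        have h4 : (p + m) • y + (q - m) • z = (p • y + q • z) + (m • y - m • z) := by
          module
        rw [h4] at h2
        have h5 : m • y - m • z = 0 := by
          have h6 := h2
          rw [add_eq_left] at h6
          exact h6
        rw [sub_eq_zero] at h5
        exact h5
      calc y = m⁻¹ • (m • y) := (inv_smul_smul₀ (ne_of_gt hmpos) y).symm
        _ = m⁻¹ • (m • z) := by rw [h3]
        _ = z := inv_smul_smul₀ (ne_of_gt hmpos) z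
    rw [← hcombo, hyz]
    rw [show q = 1 - p by linarith]; module

end Key
section Analytic

variable {𝕂 X : Type*} [RCLike 𝕂] [NormedAddCommGroup X] [NormedSpace 𝕂 X]

lemma my_unit_norm {z : X} (hz : z ≠ 0) : ‖((‖z‖ : ℝ) : 𝕂)⁻¹ • z‖ = 1 := by
  rw [norm_smul, norm_inv, RCLike.norm_ofReal, abs_of_nonneg (norm_nonneg z),
    inv_mul_cancel₀ (norm_ne_zero_iff.mpr hz)]

variable {k : ℕ} {Y : Type*} [NormedAddCommGroup Y] [NormedSpace 𝕂 Y]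

lemma my_polyEval_norm_le (M : ContinuousMultilinearMap 𝕂 (fun _ : Fin k => X) Y) {x : X}
    (hx : x ∈ Metric.closedBall (0:X) 1) : ‖polyEval M x‖ ≤ ‖M‖ := by
  rw [mem_closedBall_zero_iff] at hx
  calc ‖polyEval M x‖ ≤ ‖M‖ * ∏ _i : Fin k, ‖x‖ := M.le_opNorm _
    _ ≤ ‖M‖ * 1 := by
        apply mul_le_mul_of_nonneg_left _ (norm_nonneg M)
        exact Finset.prod_le_one (fun _ _ => norm_nonneg x) (fun _ _ => hx)
    _ = ‖M‖ := mul_one _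

lemma my_bddAbove (M : ContinuousMultilinearMap 𝕂 (fun _ : Fin k => X) Y) :
    BddAbove ((fun x => ‖polyEval M x‖) '' Metric.closedBall (0:X) 1) := by
  refine ⟨‖M‖, ?_⟩
  rintro _ ⟨x, hx, rfl⟩
  exact my_polyEval_norm_le M hx

lemma my_le_supNorm (M : ContinuousMultilinearMap 𝕂 (fun _ : Fin k => X) Y) {x : X}
    (hx : x ∈ Metric.closedBall (0:X) 1) : ‖polyEval M x‖ ≤ supNorm (polyEval M) :=
  le_csSup (my_bddAbove M) ⟨x, hx, rfl⟩

lemma my_real_csSup_mul (s : Set ℝ) (hne : s.Nonempty) (hb : BddAbove s) {c : ℝ} (hc : 0 ≤ c) :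
    sSup ((fun t => t * c) '' s) = sSup s * c := by
  rcases hc.eq_or_lt with rfl | hcpos
  · rw [show (fun t : ℝ => t * (0:ℝ)) = fun _ => (0:ℝ) from funext fun t => mul_zero t,
      hne.image_const, csSup_singleton, mul_zero]
  · have hbim : BddAbove ((fun t => t * c) '' s) := by
      obtain ⟨B, hB⟩ := hb
      refine ⟨B * c, ?_⟩
      rintro _ ⟨t, ht, rfl⟩
      exact mul_le_mul_of_nonneg_right (hB ht) hc
    apply le_antisymm
    · apply csSup_le (hne.image _)
      rintro _ ⟨t, ht, rfl⟩
      exact mul_le_mul_of_nonneg_right (le_csSup hb ht) hc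
    · rw [← le_div_iff₀ hcpos]
      apply csSup_le hne
      intro t ht
      rw [le_div_iff₀ hcpos]
      exact le_csSup hbim ⟨t, ht, rfl⟩

lemma my_supNorm_smulRight (L : ContinuousMultilinearMap 𝕂 (fun _ : Fin k => X) 𝕂) (u : X) :
    supNorm (polyEval (L.smulRight u)) = supNorm (polyEval L) * ‖u‖ := by
  unfold supNorm
  have hfun : (fun x => ‖polyEval (L.smulRight u) x‖) =
      (fun t => t * ‖u‖) ∘ (fun x => ‖polyEval L x‖) := by
    funext x
    simp only [Function.comp_apply]
    show ‖polyEval L x • u‖ = ‖polyEval L x‖ * ‖u‖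
    rw [norm_smul]
  rw [hfun, Set.image_comp]
  exact my_real_csSup_mul _ (⟨_, Set.mem_image_of_mem _ (mem_closedBall_self zero_le_one)⟩)
    (my_bddAbove L) (norm_nonneg u)

lemma my_numRadius_nonneg (f : X → X) : 0 ≤ numRadius 𝕂 f := by
  apply Real.sSup_nonneg
  rintro r ⟨x, x', _, _, _, rfl⟩
  exact norm_nonneg _

/-- The main norming lemma. -/
lemma my_norming (hk : 1 ≤ k) (hidx : polyNumIndex 𝕂 X k = 1)
    {x₀ : X} (hx₀ : x₀ ∈ polyAttainPts 𝕂 X k) (u₀ : X) (hu₀ : ‖u₀‖ = 1) :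
    ∃ f : WeakDual 𝕂 X, ‖WeakDual.toStrongDual f‖ ≤ 1 ∧ ‖f x₀‖ = 1 ∧ ‖f u₀‖ = 1 := by
  classical
  obtain ⟨hx₀ball, L, hLne, hstr⟩ := hx₀
  set p : X → 𝕂 := polyEval L with hp
  -- a point where p is nonzero
  have hpx : ∃ x, p x ≠ 0 := by
    by_contra h
    push_neg at h
    exact hLne (funext h)
  obtain ⟨z, hz⟩ := hpx
  have hzne : z ≠ 0 := by
    intro h
    apply hz
    rw [h]
    show L (fun _ => (0:X)) = 0
    exact L.map_coord_zero ⟨0, hk⟩ rfl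
  set z1 : X := ((‖z‖ : ℝ) : 𝕂)⁻¹ • z with hz1
  have hz1norm : ‖z1‖ = 1 := my_unit_norm hzne
  have hz1ball : z1 ∈ Metric.closedBall (0:X) 1 := mem_closedBall_zero_iff.2 hz1norm.le
  have hpz1 : p z1 ≠ 0 := by
    have : p z1 = (((‖z‖ : ℝ) : 𝕂)⁻¹) ^ k • p z := by
      show L (fun _ => ((‖z‖ : ℝ) : 𝕂)⁻¹ • z) = _
      have := L.map_smul_univ (fun _ : Fin k => ((‖z‖ : ℝ) : 𝕂)⁻¹) (fun _ => z)
      rw [this, Finset.prod_const, Finset.card_univ, Fintype.card_fin]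
      rfl
    rw [this]
    apply smul_ne_zero _ hz
    apply pow_ne_zero
    apply inv_ne_zero
    simpa using norm_ne_zero_iff.mpr hzne
  set S : ℝ := supNorm p with hS
  have hSpos : 0 < S := lt_of_lt_of_le (norm_pos_iff.2 hpz1) (my_le_supNorm L hz1ball)
  -- the polynomial P
  set u : X := ((S : ℝ) : 𝕂)⁻¹ • u₀ with hu
  have hu_norm : ‖u‖ = S⁻¹ := by
    rw [hu, norm_smul, norm_inv, RCLike.norm_ofReal, abs_of_pos hSpos, hu₀, mul_one]
  set P := L.smulRight u with hP
  have hPsup : supNorm (polyEval P) = 1 := by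
    rw [hP, my_supNorm_smulRight, hu_norm, ← hS, mul_inv_cancel₀ (ne_of_gt hSpos)]
  -- numerical radius of P is 1
  set R : Set ℝ := {r | ∃ (x : X) (x' : X →L[𝕂] 𝕂), ‖x‖ = 1 ∧ ‖x'‖ = 1 ∧ x' x = 1 ∧
      r = ‖x' (polyEval P x)‖} with hR
  have hRsup : numRadius 𝕂 (polyEval P) = sSup R := rfl
  have hRle : ∀ r ∈ R, r ≤ 1 := by
    rintro r ⟨x, x', hx1, hx'1, _, rfl⟩
    calc ‖x' (polyEval P x)‖ ≤ ‖x'‖ * ‖polyEval P x‖ := x'.le_opNorm _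
      _ = ‖polyEval P x‖ := by rw [hx'1, one_mul]
      _ ≤ supNorm (polyEval P) := my_le_supNorm P (mem_closedBall_zero_iff.2 hx1.le)
      _ = 1 := hPsup
  have hv : numRadius 𝕂 (polyEval P) = 1 := by
    apply le_antisymm
    · rw [hRsup]; exact Real.sSup_le hRle zero_le_one
    · rw [← hidx]
      apply csInf_le
      · refine ⟨0, ?_⟩
        rintro r ⟨L', _, rfl⟩
        exact my_numRadius_nonneg _
      · exact ⟨P, hPsup, rfl⟩
  have hRne : R.Nonempty := by
    by_contra h
    rw [Set.not_nonempty_iff_eq_empty] at h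
    rw [hRsup, h, Real.sSup_empty] at hv
    norm_num at hv
  -- maximizing sequences
  have hseq : ∀ n : ℕ, ∃ (x : X) (x' : X →L[𝕂] 𝕂), ‖x‖ = 1 ∧ ‖x'‖ = 1 ∧ x' x = 1 ∧
      1 - 1/(n+1) < ‖x' (polyEval P x)‖ := by
    intro n
    have hlt : 1 - 1/((n:ℝ)+1) < sSup R := by
      rw [← hRsup, hv]
      have : 0 < 1/((n:ℝ)+1) := by positivity
      linarith
    obtain ⟨r, hrR, hr⟩ := exists_lt_of_lt_csSup hRne hlt
    obtain ⟨x, x', h1, h2, h3, rfl⟩ := hrR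
    exact ⟨x, x', h1, h2, h3, hr⟩
  choose xs x's hxs hx's hxx' hlb using hseq
  set a : ℕ → ℝ := fun n => ‖p (xs n)‖ with ha
  set b : ℕ → ℝ := fun n => ‖x's n u‖ with hb
  have hab : ∀ n, ‖x's n (polyEval P (xs n))‖ = a n * b n := by
    intro n
    have h1 : polyEval P (xs n) = p (xs n) • u := rfl
    rw [h1, map_smul, smul_eq_mul, norm_mul]
  have haS : ∀ n, a n ≤ S := fun n =>
    my_le_supNorm L (mem_closedBall_zero_iff.2 (hxs n).le)
  have hbS : ∀ n, b n ≤ S⁻¹ := by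
    intro n
    calc b n ≤ ‖x's n‖ * ‖u‖ := (x's n).le_opNorm _
      _ = S⁻¹ := by rw [hx's n, one_mul, hu_norm]
  have ha_lb : ∀ n : ℕ, (1 - 1/((n:ℝ)+1)) * S < a n := by
    intro n
    have h1 : 1 - 1/((n:ℝ)+1) < a n * b n := by rw [← hab n]; exact hlb n
    have h2 : a n * b n ≤ a n * S⁻¹ := by
      apply mul_le_mul_of_nonneg_left (hbS n) (norm_nonneg _)
    have h3 : 1 - 1/((n:ℝ)+1) < a n * S⁻¹ := lt_of_lt_of_le h1 h2
    rw [← div_eq_mul_inv, lt_div_iff₀ hSpos] at h3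
    linarith [h3]
  have hb_lb : ∀ n : ℕ, (1 - 1/((n:ℝ)+1)) * S⁻¹ < b n := by
    intro n
    have h1 : 1 - 1/((n:ℝ)+1) < a n * b n := by rw [← hab n]; exact hlb n
    have h2 : a n * b n ≤ S * b n := by
      apply mul_le_mul_of_nonneg_right (haS n) (norm_nonneg _)
    have h3 : 1 - 1/((n:ℝ)+1) < S * b n := lt_of_lt_of_le h1 h2
    rw [← div_eq_mul_inv, div_lt_iff₀ hSpos, mul_comm (b n) S]
    exact h3
  have hone : Tendsto (fun n : ℕ => 1 - 1/((n:ℝ)+1)) atTop (𝓝 1) := by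
    have h0 : Tendsto (fun n : ℕ => 1/((n:ℝ)+1)) atTop (𝓝 0) :=
      tendsto_one_div_add_atTop_nhds_zero_nat
    have := tendsto_const_nhds (x := (1:ℝ)) (f := atTop (α := ℕ)) |>.sub h0
    simpa using this
  have haT : Tendsto a atTop (𝓝 S) := by
    apply tendsto_of_tendsto_of_tendsto_of_le_of_le (g := fun n : ℕ => (1 - 1/((n:ℝ)+1)) * S)
      (h := fun _ : ℕ => S)
    · simpa using hone.mul_const S
    · exact tendsto_const_nhds
    · exact fun n => (ha_lb n).le
    · exact haS
  have hbT : Tendsto b atTop (𝓝 S⁻¹) := by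
    apply tendsto_of_tendsto_of_tendsto_of_le_of_le (g := fun n : ℕ => (1 - 1/((n:ℝ)+1)) * S⁻¹)
      (h := fun _ : ℕ => S⁻¹)
    · simpa using hone.mul_const S⁻¹
    · exact tendsto_const_nhds
    · exact fun n => (hb_lb n).le
    · exact hbS
  -- strong attainment
  obtain ⟨α, φ, hφ, hα, hconv⟩ := hstr xs
    (fun n => mem_closedBall_zero_iff.2 (hxs n).le) haT
  -- weak-* cluster point
  set g : ℕ → WeakDual 𝕂 X := fun n => StrongDual.toWeakDual (x's (φ n)) with hg
  have hgball : ∀ n, g n ∈ dualBallW 𝕂 X := by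
    intro n
    rw [mem_dualBallW]
    show ‖x's (φ n)‖ ≤ 1
    rw [hx's (φ n)]
  have hball_compact : IsCompact (dualBallW 𝕂 X) := WeakDual.isCompact_closedBall (𝕜 := 𝕂) (E := X) 0 1
  have hle : Filter.map g atTop ≤ Filter.principal (dualBallW 𝕂 X) := by
    rw [Filter.le_principal_iff, Filter.mem_map]
    exact Filter.Eventually.of_forall hgball
  obtain ⟨f₀, hf₀mem, hf₀cl⟩ := hball_compact hle
  -- f₀ (α • x₀) = 1
  have hval : Tendsto (fun n => (g n) (α • x₀)) atTop (𝓝 1) := by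
    rw [tendsto_iff_norm_sub_tendsto_zero]
    have hbound : ∀ n, ‖(g n) (α • x₀) - 1‖ ≤ ‖xs (φ n) - α • x₀‖ := by
      intro n
      have h1 : (g n) (α • x₀) - 1 = x's (φ n) (α • x₀ - xs (φ n)) := by
        rw [map_sub, hxx' (φ n)]
        rfl
      rw [h1]
      calc ‖x's (φ n) (α • x₀ - xs (φ n))‖ ≤ ‖x's (φ n)‖ * ‖α • x₀ - xs (φ n)‖ :=
          (x's (φ n)).le_opNorm _
        _ = ‖xs (φ n) - α • x₀‖ := by rw [hx's (φ n), one_mul, norm_sub_rev]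
    have hzero : Tendsto (fun n => ‖xs (φ n) - α • x₀‖) atTop (𝓝 0) := by
      rw [← tendsto_iff_norm_sub_tendsto_zero]
      exact hconv
    exact squeeze_zero (fun n => norm_nonneg _) hbound hzero
  have hccl : ClusterPt (f₀ (α • x₀)) (Filter.map (fun n => (g n) (α • x₀)) atTop) := by
    have := hf₀cl.map (WeakDual.eval_continuous (α • x₀)).continuousAt Filter.tendsto_map
    rwa [Filter.map_map] at this
  have hf₀val : f₀ (α • x₀) = 1 :=
    t2_iff_nhds.mp inferInstance (hccl.mono hval)
  have hf₀x₀ : ‖f₀ x₀‖ = 1 := by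
    have h1 : f₀ (α • x₀) = α * f₀ x₀ := by rw [map_smul, smul_eq_mul]
    have h2 : ‖α * f₀ x₀‖ = 1 := by rw [← h1, hf₀val, norm_one]
    rwa [norm_mul, hα, one_mul] at h2
  -- f₀ u
  have hvalu : Tendsto (fun n => ‖(g n) u‖) atTop (𝓝 S⁻¹) := by
    have : (fun n => ‖(g n) u‖) = b ∘ φ := rfl
    rw [this]
    exact hbT.comp hφ.tendsto_atTop
  have hcclu : ClusterPt ‖f₀ u‖ (Filter.map (fun n => ‖(g n) u‖) atTop) := by
    have := hf₀cl.map ((continuous_norm.comp (WeakDual.eval_continuous u)).continuousAt)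
      Filter.tendsto_map
    rwa [Filter.map_map] at this
  have hf₀u : ‖f₀ u‖ = S⁻¹ :=
    t2_iff_nhds.mp inferInstance (hcclu.mono hvalu)
  have hf₀u₀ : ‖f₀ u₀‖ = 1 := by
    have h1 : f₀ u = ((S : ℝ) : 𝕂)⁻¹ * f₀ u₀ := by rw [hu, map_smul, smul_eq_mul]
    have h2 : ‖f₀ u‖ = S⁻¹ * ‖f₀ u₀‖ := by
      rw [h1, norm_mul, norm_inv, RCLike.norm_ofReal, abs_of_pos hSpos]
    have h3 : S⁻¹ * ‖f₀ u₀‖ = S⁻¹ * 1 := by rw [← h2, hf₀u, mul_one]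
    exact mul_left_cancel₀ (inv_ne_zero (ne_of_gt hSpos)) h3
  exact ⟨f₀, mem_dualBallW.1 hf₀mem, hf₀x₀, hf₀u₀⟩

end Analytic
section Final

variable {𝕂 X : Type*} [RCLike 𝕂] [NormedAddCommGroup X] [NormedSpace 𝕂 X]

lemma my_key {A : Set (WeakDual 𝕂 X)} (hA_closed : IsClosed A) (hA_sub : A ⊆ dualBallW 𝕂 X)
    (hbal : ∀ f ∈ A, ∀ α : 𝕂, ‖α‖ = 1 → α • f ∈ A)
    (hnorm : ∀ w : X, ∃ f ∈ A, ‖f w‖ = ‖w‖)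
    {e : X →L[𝕂] 𝕂} (he : IsExtremePt (Metric.closedBall (0 : X →L[𝕂] 𝕂) 1) e) :
    StrongDual.toWeakDual e ∈ A := by
  have hball_compact : IsCompact (dualBallW 𝕂 X) :=
    WeakDual.isCompact_closedBall (𝕜 := 𝕂) (E := X) 0 1
  have hball_closed : IsClosed (dualBallW 𝕂 X) := WeakDual.isClosed_closedBall 0 1
  have hAcomp : IsCompact A := hball_compact.of_isClosed_subset hA_closed hA_sub
  have heq : dualBallW 𝕂 X = closure (convexHull ℝ A) := by
    apply Set.Subset.antisymm (my_ball_subset_closure_convexHull hbal hnorm)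
    exact closure_minimal (convexHull_min hA_sub dualBallW_convex) hball_closed
  have hclosA : closure A = A := hAcomp.isClosed.closure_eq
  have := my_milman hAcomp heq (heq ▸ hball_compact) (my_extremePt_mem_extremePoints he)
  exact this

end Final
/-- if `n^(k)(X) = 1` then `|x*(x)| = 1` for every `x ∈ ρ̃𝒫(ᵏX)` and every
extreme point `x*` of the dual unit ball. -/
theorem statement5 {𝕂 X : Type*} [RCLike 𝕂] [NormedAddCommGroup X] [NormedSpace 𝕂 X]
    [CompleteSpace X] {k : ℕ} (hk : 1 ≤ k) (hidx : polyNumIndex 𝕂 X k = 1) :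
    ∀ x ∈ polyAttainPts 𝕂 X k, ∀ x' : X →L[𝕂] 𝕂,
      IsExtremePt (Metric.closedBall (0 : X →L[𝕂] 𝕂) 1) x' → ‖x' x‖ = 1 
    := by
  intro x hx x' hx'
  classical
  -- the norming set A
  set A : Set (WeakDual 𝕂 X) :=
    {f : WeakDual 𝕂 X | ‖WeakDual.toStrongDual f‖ ≤ 1 ∧ ‖f x‖ = 1} with hA
  have hA_sub : A ⊆ dualBallW 𝕂 X := fun f hf => mem_dualBallW.2 hf.1
  have hA_closed : IsClosed A := by
    have h1 : A = dualBallW 𝕂 X ∩ ((fun f : WeakDual 𝕂 X => ‖f x‖) ⁻¹' {1}) := by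
      ext f
      simp [hA, dualBallW, mem_closedBall_zero_iff]
    rw [h1]
    exact (WeakDual.isClosed_closedBall 0 1).inter
      (IsClosed.preimage (continuous_norm.comp (WeakDual.eval_continuous x))
        isClosed_singleton)
  have hbal : ∀ f ∈ A, ∀ α : 𝕂, ‖α‖ = 1 → α • f ∈ A := by
    rintro f ⟨hf1, hf2⟩ α hα
    constructor
    · show ‖WeakDual.toStrongDual (α • f)‖ ≤ 1
      have : WeakDual.toStrongDual (α • f) = α • WeakDual.toStrongDual f := rfl
      rw [this, norm_smul, hα, one_mul]
      exact hf1
    · show ‖(α • f) x‖ = 1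
      have : (α • f) x = α * f x := rfl
      rw [this, norm_mul, hα, one_mul]
      exact hf2
  have hnorm : ∀ w : X, ∃ f ∈ A, ‖f w‖ = ‖w‖ := by
    intro w
    rcases eq_or_ne w 0 with rfl | hw
    · -- need some element of A
      obtain ⟨_, L, hLne, _⟩ := id hx
      have hpx : ∃ z, polyEval L z ≠ 0 := by
        by_contra h
        push_neg at h
        exact hLne (funext h)
      obtain ⟨z, hz⟩ := hpx
      have hzne : z ≠ 0 := by
        intro h
        apply hz
        rw [h]
        show L (fun _ => (0:X)) = 0
        exact L.map_coord_zero ⟨0, hk⟩ rfl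
      obtain ⟨f, hf1, hf2, _⟩ := my_norming hk hidx hx _ (my_unit_norm (𝕂 := 𝕂) hzne)
      exact ⟨f, ⟨hf1, hf2⟩, by rw [map_zero, norm_zero, norm_zero]⟩
    · obtain ⟨f, hf1, hf2, hf3⟩ := my_norming hk hidx hx _ (my_unit_norm (𝕂 := 𝕂) hw)
      refine ⟨f, ⟨hf1, hf2⟩, ?_⟩
      have hw' : ((‖w‖ : ℝ) : 𝕂) ≠ 0 := by
        simpa using norm_ne_zero_iff.mpr hw
      have h1 : w = ((‖w‖ : ℝ) : 𝕂) • (((‖w‖ : ℝ) : 𝕂)⁻¹ • w) := (smul_inv_smul₀ hw' w).symm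
      calc ‖f w‖ = ‖f (((‖w‖ : ℝ) : 𝕂) • (((‖w‖ : ℝ) : 𝕂)⁻¹ • w))‖ := by rw [← h1]
        _ = ‖((‖w‖ : ℝ) : 𝕂)‖ * ‖f (((‖w‖ : ℝ) : 𝕂)⁻¹ • w)‖ := by
            rw [map_smul, smul_eq_mul, norm_mul]
        _ = ‖w‖ := by
            rw [hf3, RCLike.norm_ofReal, abs_of_nonneg (norm_nonneg w), mul_one]
  have := my_key hA_closed hA_sub hbal hnorm hx'
  exact this.2
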